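/- Let c ≥ 1, 0 < δ ≤ 1, and a = a_δ(c) with a^δ = 4c·log²(ea). If every subgraph H of G has a balanced separator of order at most c|V(H)|^{1−δ}, then |E(G)| ≤ a·(|V(G)| − h(|V(G)|)), where h(n) = n/(2 log(en)). -/

import Mathlib

namespace Paper

/-- A separator of a graph `G`: a pair `(A,B)` of vertex sets covering `V(G)` with no
edge between `A \ B` and `B \ A`. -/
def IsSeparator {V : Type*} (G : SimpleGraph V) (A B : Set V) : Prop :=
  A ∪ B = Set.univ ∧ ∀ a ∈ A \ B, ∀ b ∈ B \ A, ¬ G.Adj a b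

/-- The order of a separator `(A,B)` is `|A ∩ B|`. -/
noncomputable def sepOrder {V : Type*} (A B : Set V) : ℕ := Nat.card ↥(A ∩ B)

/-- A balanced separator: both `|A \ B|` and `|B \ A|` are at most `2|V(G)|/3`. -/
def IsBalancedSeparator {V : Type*} (G : SimpleGraph V) (A B : Set V) : Prop :=
  IsSeparator G A B ∧ 3 * Nat.card ↥(A \ B) ≤ 2 * Nat.card V ∧
    3 * Nat.card ↥(B \ A) ≤ 2 * Nat.card V

/-- `G` is an `α`-expander: every set `A` with `|A| ≤ |V|/2` has at least `α|A|`
outside neighbours. -/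
def IsExpander {V : Type*} (G : SimpleGraph V) (α : ℝ) : Prop :=
  ∀ A : Set V, 2 * Nat.card ↥A ≤ Nat.card V →
    α * (Nat.card ↥A : ℝ) ≤ (Nat.card ↥{v | v ∉ A ∧ ∃ a ∈ A, G.Adj v a} : ℝ)

/-- A tree decomposition of `G` with bags `β` indexed by the vertices of a tree `T`. -/
def IsTreeDecomp {V ι : Type*} (G : SimpleGraph V) (T : SimpleGraph ι) (β : ι → Set V) : Prop :=
  T.IsTree ∧ (∀ v : V, ∃ i, v ∈ β i) ∧
    (∀ u v : V, G.Adj u v → ∃ i, u ∈ β i ∧ v ∈ β i) ∧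
    (∀ v : V, (T.induce {i | v ∈ β i}).Connected)

/-- The treewidth of `G`: the least `k` admitting a tree decomposition with bags of
size at most `k + 1`. -/
noncomputable def treewidth {V : Type*} (G : SimpleGraph V) : ℕ :=
  sInf {k | ∃ (ι : Type) (T : SimpleGraph ι) (β : ι → Set V),
    Finite ι ∧ IsTreeDecomp G T β ∧ ∀ i, Nat.card ↥(β i) ≤ k + 1}

/-- `H` is a minor of `G`: branch sets are nonempty, connected, pairwise disjoint,
and adjacency of `H` is realized by edges of `G` between branch sets. -/
def IsMinor {W V : Type*} (H : SimpleGraph W) (G : SimpleGraph V) : Prop :=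
  ∃ φ : W → Set V, (∀ w, (φ w).Nonempty) ∧ (∀ w, (G.induce (φ w)).Connected) ∧
    (Pairwise fun w w' => Disjoint (φ w) (φ w')) ∧
    ∀ w w', H.Adj w w' → ∃ a ∈ φ w, ∃ b ∈ φ w', G.Adj a b

/-- `H` is an `r`-minor of `G`: a minor all of whose branch sets have radius at most `r`. -/
def IsRMinor {W V : Type*} (r : ℕ) (H : SimpleGraph W) (G : SimpleGraph V) : Prop :=
  ∃ φ : W → Set V, (∀ w, (φ w).Nonempty) ∧ (∀ w, (G.induce (φ w)).Connected) ∧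
    (∀ w, ∃ u : φ w, ∀ v : φ w, (G.induce (φ w)).dist u v ≤ r) ∧
    (Pairwise fun w w' => Disjoint (φ w) (φ w')) ∧
    ∀ w w', H.Adj w w' → ∃ a ∈ φ w, ∃ b ∈ φ w', G.Adj a b

/-- Every subgraph `H` of `G` (on `n` vertices) has a balanced separator of order at
most `c · n ^ β`. -/
def HasSmallSeparators {V : Type*} (G : SimpleGraph V) (c β : ℝ) : Prop :=
  ∀ (s : Set V) (H : SimpleGraph s), H ≤ G.induce s →
    ∃ A B : Set s, IsBalancedSeparator H A B ∧
      (sepOrder A B : ℝ) ≤ c * (Nat.card ↥s : ℝ) ^ β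



/-! ### Auxiliary lemmas -/

lemma cubicx (q : ℝ) (hql : 577/1000 ≤ q) (hqu : q ≤ 711/1000) :
    27/100 ≤ 2 * q^2 * (1 - q) := by
  nlinarith [mul_nonneg (sub_nonneg.2 hql) (sub_nonneg.2 hqu),
    mul_nonneg (mul_nonneg (sub_nonneg.2 hql) (sub_nonneg.2 hqu)) (sub_nonneg.2 hql),
    mul_nonneg (mul_nonneg (sub_nonneg.2 hql) (sub_nonneg.2 hqu)) (sub_nonneg.2 hqu),
    sq_nonneg (q - 2/3)]

lemma cubicy (r : ℝ) (hrl : 707/1000 ≤ r) (hru : r ≤ 823/1000) :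
    23/100 ≤ 2 * r^2 * (1 - r) := by
  nlinarith [mul_nonneg (sub_nonneg.2 hrl) (sub_nonneg.2 hru),
    mul_nonneg (mul_nonneg (sub_nonneg.2 hrl) (sub_nonneg.2 hru)) (sub_nonneg.2 hrl),
    mul_nonneg (mul_nonneg (sub_nonneg.2 hrl) (sub_nonneg.2 hru)) (sub_nonneg.2 hru),
    sq_nonneg (r - 3/4)]

lemma gain_aux (m z ql qu g : ℝ) (hm0 : 0 < m) (hz0 : 0 < z)
    (hl : ql^2 * m ≤ z) (hu : z ≤ qu^2 * m) (hql0 : 0 ≤ ql) (hqu0 : 0 ≤ qu)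
    (hcubic : ∀ q : ℝ, ql ≤ q → q ≤ qu → g ≤ 2 * q^2 * (1 - q)) :
    g * m ≤ z * (Real.log m - Real.log z) := by
  set q := Real.sqrt (z / m) with hq
  have hq0 : 0 < q := Real.sqrt_pos.mpr (by positivity)
  have hq2 : q ^ 2 = z / m := Real.sq_sqrt (by positivity : (0:ℝ) ≤ z / m)
  have hzq : z = m * q ^ 2 := by rw [hq2]; field_simp
  have hsq1 : ql ^ 2 ≤ q ^ 2 := le_of_mul_le_mul_left (by nlinarith) hm0
  have hsq2 : q ^ 2 ≤ qu ^ 2 := le_of_mul_le_mul_left (by nlinarith) hm0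
  have hqll : ql ≤ q := by nlinarith
  have hquu : q ≤ qu := by nlinarith
  have hlogq : Real.log q ≤ q - 1 := Real.log_le_sub_one_of_pos hq0
  have hlz : Real.log m - Real.log z = -(2 * Real.log q) := by
    have h1 : Real.log (z / m) = Real.log z - Real.log m :=
      Real.log_div (ne_of_gt hz0) (ne_of_gt hm0)
    have h2 : Real.log (q ^ 2) = 2 * Real.log q := by
      rw [Real.log_pow]; push_cast; ring
    rw [hq2] at h2; linarith
  have hcub := hcubic q hqll hquu
  rw [hlz, hzq]
  have h3 : 2 * (1 - q) ≤ -(2 * Real.log q) := by linarith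
  calc g * m ≤ (2 * q^2 * (1 - q)) * m := by nlinarith
    _ = m * q^2 * (2 * (1 - q)) := by ring
    _ ≤ m * q ^ 2 * -(2 * Real.log q) := by
        apply mul_le_mul_of_nonneg_left h3 (by positivity)

lemma keylem (x Lx L : ℝ) (hLx1 : 1 ≤ Lx) (hLxL : Lx ≤ L) (hx0 : 0 ≤ x) :
    x / (2 * L) + x * (L - Lx) / (2 * L ^ 2) ≤ x / (2 * Lx) := by
  have hLx0 : (0:ℝ) < Lx := by linarith
  have hL0 : (0:ℝ) < L := by linarith
  have hid : x / (2 * Lx) - (x / (2 * L) + x * (L - Lx) / (2 * L ^ 2))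
      = x * (L - Lx) ^ 2 / (2 * Lx * L ^ 2) := by
    field_simp
    ring
  nlinarith [div_nonneg (mul_nonneg hx0 (sq_nonneg (L - Lx)))
    (by positivity : (0:ℝ) ≤ 2 * Lx * L ^ 2)]

lemma sumlem (m t L : ℝ) (hL : 1 ≤ L) (ht0 : 0 ≤ t) (ht : t ≤ m / (4 * L ^ 2)) :
    m / (2 * L) + t ≤ (m + t) / (2 * L) + (1 / 2 * m) / (2 * L ^ 2) := by
  have e1 : (m + t) / (2 * L) = m / (2 * L) + t / (2 * L) := by ring
  have e2 : (1 / 2 * m) / (2 * L ^ 2) = m / (4 * L ^ 2) := by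
    rw [div_eq_div_iff (by positivity) (by positivity)]
    ring
  have h3 : 0 ≤ t / (2 * L) := by positivity
  linarith

lemma core_ineq (m t x y L : ℝ) (hm : 54 ≤ m) (hLdef : L = Real.log (Real.exp 1 * m))
    (hL5 : 5 ≤ L) (ht0 : 0 ≤ t) (ht : t ≤ m / (4 * L ^ 2))
    (hxy : x + y = m + t) (hxley : x ≤ y) (hyle : y ≤ 2 * m / 3 + t) :
    m / (2 * L) + t ≤ x / (2 * Real.log (Real.exp 1 * x))
      + y / (2 * Real.log (Real.exp 1 * y)) := by
  have hm0 : (0:ℝ) < m := by linarith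
  have hL0 : (0:ℝ) < L := by linarith
  have h100 : (100:ℝ) ≤ 4 * L ^ 2 := by nlinarith
  have ht100 : t ≤ m / 100 := le_trans ht (div_le_div_of_nonneg_left hm0.le (by norm_num) h100)
  have hx3 : m / 3 ≤ x := by linarith
  have hxu : x ≤ 101 / 200 * m := by linarith
  have hyl : m / 2 ≤ y := by linarith
  have hyu : y ≤ 203 / 300 * m := by linarith
  have hx0 : (0:ℝ) < x := by linarith
  have hy0 : (0:ℝ) < y := by linarith
  have hLm : L = 1 + Real.log m := by
    rw [hLdef, Real.log_mul (Real.exp_ne_zero 1) (ne_of_gt hm0), Real.log_exp]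
  have hLx : Real.log (Real.exp 1 * x) = 1 + Real.log x := by
    rw [Real.log_mul (Real.exp_ne_zero 1) (ne_of_gt hx0), Real.log_exp]
  have hLy : Real.log (Real.exp 1 * y) = 1 + Real.log y := by
    rw [Real.log_mul (Real.exp_ne_zero 1) (ne_of_gt hy0), Real.log_exp]
  rw [hLx, hLy]
  have hx1 : (1:ℝ) ≤ x := by linarith
  have hy1 : (1:ℝ) ≤ y := by linarith
  have hLx1 : 1 ≤ 1 + Real.log x := by have := Real.log_nonneg hx1; linarith
  have hLy1 : 1 ≤ 1 + Real.log y := by have := Real.log_nonneg hy1; linarith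
  have hLxL : 1 + Real.log x ≤ L := by
    have : Real.log x ≤ Real.log m := Real.log_le_log hx0 (by linarith)
    rw [hLm]; linarith
  have hLyL : 1 + Real.log y ≤ L := by
    have : Real.log y ≤ Real.log m := Real.log_le_log hy0 (by linarith)
    rw [hLm]; linarith
  have xgain : 27 / 100 * m ≤ x * (L - (1 + Real.log x)) := by
    have hgel : L - (1 + Real.log x) = Real.log m - Real.log x := by rw [hLm]; ring
    rw [hgel]
    exact gain_aux m x (577/1000) (711/1000) (27/100) hm0 hx0
      (by nlinarith) (by nlinarith) (by norm_num) (by norm_num) (fun q h1 h2 => cubicx q h1 h2)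
  have ygain : 23 / 100 * m ≤ y * (L - (1 + Real.log y)) := by
    have hgel : L - (1 + Real.log y) = Real.log m - Real.log y := by rw [hLm]; ring
    rw [hgel]
    exact gain_aux m y (707/1000) (823/1000) (23/100) hm0 hy0
      (by nlinarith) (by nlinarith) (by norm_num) (by norm_num) (fun r h1 h2 => cubicy r h1 h2)
  have keyx := keylem x (1 + Real.log x) L hLx1 hLxL hx0.le
  have keyy := keylem y (1 + Real.log y) L hLy1 hLyL hy0.le
  have hsum : m / (2 * L) + t ≤ (x + y) / (2 * L) + (1 / 2 * m) / (2 * L ^ 2) := by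
    rw [hxy]; exact sumlem m t L (by linarith) ht0 ht
  have gains : (1 / 2 * m) / (2 * L ^ 2)
      ≤ x * (L - (1 + Real.log x)) / (2 * L ^ 2) + y * (L - (1 + Real.log y)) / (2 * L ^ 2) := by
    rw [← add_div]
    apply div_le_div_of_nonneg_right ?_ (by positivity)
    linarith
  have expand : (x + y) / (2 * L) = x / (2 * L) + y / (2 * L) := by ring
  linarith

lemma a_facts (c δ a : ℝ) (hc : 1 ≤ c) (hδ0 : 0 < δ) (hδ1 : δ ≤ 1) (ha : 1 ≤ a)
    (haeq : a ^ δ = 4 * c * (Real.log (Real.exp 1 * a)) ^ 2) :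
    54 ≤ a ∧ 5 ≤ Real.log (Real.exp 1 * a) ∧ 2 ≤ δ * Real.log (Real.exp 1 * a) := by
  have ha0 : (0:ℝ) < a := by linarith
  have hel : Real.log (Real.exp 1 * a) = 1 + Real.log a := by
    rw [Real.log_mul (Real.exp_ne_zero 1) (ne_of_gt ha0), Real.log_exp]
  set l := Real.log (Real.exp 1 * a) with hldef
  have hla : l = 1 + Real.log a := hel
  have hln : 0 ≤ Real.log a := Real.log_nonneg ha
  have hl1 : 1 ≤ l := by rw [hla]; linarith
  have hlog2 : (0.6931471803:ℝ) < Real.log 2 := Real.log_two_gt_d9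
  have hloga : Real.log (a ^ δ) = δ * Real.log a := Real.log_rpow ha0 δ
  have step : ∀ b : ℝ, 1 ≤ b → b ≤ 4 * c * l ^ 2 → Real.log b ≤ Real.log a := by
    intro b hb hble
    have h1 : Real.log b ≤ Real.log (a ^ δ) := by
      apply Real.log_le_log (by linarith)
      rw [haeq]; exact hble
    rw [hloga] at h1
    nlinarith [Real.log_nonneg hb]
  have s1 : Real.log 4 ≤ Real.log a := by
    apply step 4 (by norm_num); nlinarith
  have hlog4 : Real.log 4 = 2 * Real.log 2 := by
    rw [show (4:ℝ) = 2 ^ 2 by norm_num, Real.log_pow]; push_cast; ring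
  have s1' : 1.386 ≤ Real.log a := by rw [hlog4] at s1; linarith
  have hl2 : 2.386 ≤ l := by rw [hla]; linarith
  have s2 : Real.log 16 ≤ Real.log a := by
    apply step 16 (by norm_num); nlinarith
  have hlog16 : Real.log 16 = 4 * Real.log 2 := by
    rw [show (16:ℝ) = 2 ^ 4 by norm_num, Real.log_pow]; push_cast; ring
  have s2' : 2.772 ≤ Real.log a := by rw [hlog16] at s2; linarith
  have hl3 : 3.772 ≤ l := by rw [hla]; linarith
  have hexp1 : Real.exp 1 < 2.7182818286 := by
    have := Real.exp_one_lt_d9; linarith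
  have hexp4 : Real.exp 4 < 56 := by
    have h4 : Real.exp 4 = (Real.exp 1) ^ 4 := by
      rw [← Real.exp_nat_mul]; norm_num
    have h0 : (0:ℝ) < Real.exp 1 := Real.exp_pos 1
    have he2 : Real.exp 1 ^ 2 < 7.38905612 := by
      calc Real.exp 1 ^ 2 < 2.7182818286 ^ 2 := pow_lt_pow_left₀ hexp1 h0.le (by norm_num)
        _ < 7.38905612 := by norm_num
    rw [h4]
    calc Real.exp 1 ^ 4 = (Real.exp 1 ^ 2) ^ 2 := by ring
      _ < 7.38905612 ^ 2 := pow_lt_pow_left₀ he2 (by positivity) (by norm_num)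
      _ < 56 := by norm_num
  have s3 : Real.log 56 ≤ Real.log a := by
    apply step 56 (by norm_num); nlinarith
  have s3' : 4 ≤ Real.log a := by
    have : Real.log (Real.exp 4) ≤ Real.log 56 := Real.log_le_log (Real.exp_pos 4) hexp4.le
    rw [Real.log_exp] at this; linarith
  have ha54 : 54 ≤ a := by
    have h1 : Real.exp 4 ≤ Real.exp (Real.log a) := Real.exp_le_exp.mpr s3'
    rw [Real.exp_log ha0] at h1
    have h2 : (54:ℝ) ≤ Real.exp 4 := by
      have h4 : Real.exp 4 = (Real.exp 1) ^ 4 := by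
        rw [← Real.exp_nat_mul]; norm_num
      have he : (2.7182818283:ℝ) < Real.exp 1 := Real.exp_one_gt_d9
      have he2 : (7.389056:ℝ) < Real.exp 1 ^ 2 := by
        calc (7.389056:ℝ) < 2.7182818283 ^ 2 := by norm_num
          _ < Real.exp 1 ^ 2 := pow_lt_pow_left₀ he (by norm_num) (by norm_num)
      rw [h4]
      have h54 : (54:ℝ) < Real.exp 1 ^ 4 := by
        calc (54:ℝ) < 7.389056 ^ 2 := by norm_num
          _ < (Real.exp 1 ^ 2) ^ 2 := pow_lt_pow_left₀ he2 (by norm_num) (by norm_num)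
          _ = Real.exp 1 ^ 4 := by ring
      linarith
    linarith
  refine ⟨ha54, by rw [hla]; linarith, ?_⟩
  have h5 : 4 * Real.log 2 ≤ δ * Real.log a := by
    have h1 : Real.log 16 ≤ Real.log (a ^ δ) := by
      apply Real.log_le_log (by norm_num)
      rw [haeq]; nlinarith
    rw [hloga, hlog16] at h1; exact h1
  have : δ * l = δ + δ * Real.log a := by rw [hla]; ring
  rw [this]; nlinarith

lemma mono_lem (c δ a m : ℝ) (hc : 1 ≤ c) (hδ0 : 0 < δ) (ha : 1 ≤ a)
    (haeq : a ^ δ = 4 * c * (Real.log (Real.exp 1 * a)) ^ 2)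
    (hdl : 2 ≤ δ * Real.log (Real.exp 1 * a)) (hm : a ≤ m) :
    4 * c * (Real.log (Real.exp 1 * m)) ^ 2 ≤ m ^ δ := by
  have ha0 : (0:ℝ) < a := by linarith
  have hm0 : (0:ℝ) < m := by linarith
  set l := Real.log (Real.exp 1 * a) with hldef
  have hla : l = 1 + Real.log a := by
    rw [hldef, Real.log_mul (Real.exp_ne_zero 1) (ne_of_gt ha0), Real.log_exp]
  have hlm : Real.log (Real.exp 1 * m) = 1 + Real.log m := by
    rw [Real.log_mul (Real.exp_ne_zero 1) (ne_of_gt hm0), Real.log_exp]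
  set u := Real.log m - Real.log a with hudef
  have hu0 : 0 ≤ u := by
    have := Real.log_le_log ha0 hm; rw [hudef]; linarith
  have hl1 : 1 ≤ l := by
    rw [hla]; have := Real.log_nonneg ha; linarith
  have hmelt : m ^ δ = a ^ δ * Real.exp (δ * u) := by
    rw [Real.rpow_def_of_pos hm0, Real.rpow_def_of_pos ha0, ← Real.exp_add]
    congr 1
    rw [hudef]; ring
  have hexpu : (1 + δ * u / 2) ^ 2 ≤ Real.exp (δ * u) := by
    have h1 : δ * u / 2 + 1 ≤ Real.exp (δ * u / 2) := Real.add_one_le_exp _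
    have h2 : Real.exp (δ * u) = (Real.exp (δ * u / 2)) ^ 2 := by
      rw [← Real.exp_nat_mul]; ring_nf
    rw [h2]
    have h0 : 0 ≤ 1 + δ * u / 2 := by positivity
    nlinarith
  have hlin : l + u ≤ l * (1 + δ * u / 2) := by nlinarith
  have hfin : (l + u) ^ 2 ≤ l ^ 2 * Real.exp (δ * u) := by
    have h0 : 0 ≤ l + u := by linarith
    calc (l + u) ^ 2 ≤ (l * (1 + δ * u / 2)) ^ 2 := by nlinarith
      _ = l ^ 2 * (1 + δ * u / 2) ^ 2 := by ring
      _ ≤ l ^ 2 * Real.exp (δ * u) := by nlinarith [sq_nonneg l]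
  rw [hmelt, haeq, hlm]
  have : 1 + Real.log m = l + u := by rw [hla, hudef]; ring
  rw [this]
  nlinarith

/-- Edges of `G` with both endpoints in `s`. -/
def ES {V : Type*} (G : SimpleGraph V) (s : Set V) : Set (Sym2 V) :=
  {e | e ∈ G.edgeSet ∧ ∀ v ∈ e, v ∈ s}

lemma ES_card_le {V : Type*} [Finite V] (G : SimpleGraph V) (s : Set V) :
    (ES G s).ncard ≤ (s.ncard).choose 2 := by
  classical
  haveI : Fintype V := Fintype.ofFinite V
  have key : Function.Surjective
      (fun e : (G.induce s).edgeSet => (⟨Sym2.map Subtype.val e.1, by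
        obtain ⟨e, he⟩ := e
        induction e with
        | _ u v =>
          rw [SimpleGraph.mem_edgeSet] at he
          refine ⟨?_, ?_⟩
          · rw [Sym2.map_pair_eq, SimpleGraph.mem_edgeSet]
            exact he
          · intro w hw
            rw [Sym2.map_pair_eq, Sym2.mem_iff] at hw
            rcases hw with rfl | rfl
            · exact u.2
            · exact v.2⟩ : ↥(ES G s))) := by
    rintro ⟨e, he⟩
    induction e with
    | _ u v =>
      obtain ⟨hadj, hsupp⟩ := he
      rw [SimpleGraph.mem_edgeSet] at hadj
      have hu : u ∈ s := hsupp u (Sym2.mem_mk_left u v)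
      have hv : v ∈ s := hsupp v (Sym2.mem_mk_right u v)
      refine ⟨⟨s(⟨u, hu⟩, ⟨v, hv⟩), ?_⟩, ?_⟩
      · rw [SimpleGraph.mem_edgeSet]
        exact hadj
      · apply Subtype.ext
        simp [Sym2.map_pair_eq]
  have h1 : Nat.card ↥(ES G s) ≤ Nat.card ↥(G.induce s).edgeSet :=
    Nat.card_le_card_of_surjective _ key
  have h2 : Nat.card ↥(G.induce s).edgeSet ≤ (Fintype.card ↥s).choose 2 := by
    rw [Nat.card_eq_fintype_card, ← SimpleGraph.edgeFinset_card]
    exact SimpleGraph.card_edgeFinset_le_card_choose_two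
  have h3 : Fintype.card ↥s = s.ncard := by
    rw [← Nat.card_eq_fintype_card, Nat.card_coe_set_eq]
  rw [← Nat.card_coe_set_eq, ← h3]
  exact h1.trans h2

lemma ES_split {V : Type*} (G : SimpleGraph V) (s : Set V) (A B : Set ↥s)
    (hAB : A ∪ B = Set.univ)
    (hsep : ∀ a ∈ A \ B, ∀ b ∈ B \ A, ¬ (G.induce s).Adj a b) :
    ES G s ⊆ ES G (Subtype.val '' A) ∪ ES G (Subtype.val '' B) := by
  intro e he
  obtain ⟨hee, hsupp⟩ := he
  induction e with
  | _ u v =>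
    rw [SimpleGraph.mem_edgeSet] at hee
    have hu : u ∈ s := hsupp u (Sym2.mem_mk_left u v)
    have hv : v ∈ s := hsupp v (Sym2.mem_mk_right u v)
    set u' : ↥s := ⟨u, hu⟩
    set v' : ↥s := ⟨v, hv⟩
    have hadj' : (G.induce s).Adj u' v' := by
      simp [SimpleGraph.comap_adj, SimpleGraph.induce]
      exact hee
    have hmemu : u' ∈ A ∪ B := by rw [hAB]; trivial
    have hmemv : v' ∈ A ∪ B := by rw [hAB]; trivial
    have pack : ∀ (C : Set ↥s), u' ∈ C → v' ∈ C →
        s(u, v) ∈ ES G (Subtype.val '' C) := by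
      intro C hu' hv'
      refine ⟨by rwa [SimpleGraph.mem_edgeSet], ?_⟩
      intro w hw
      rw [Sym2.mem_iff] at hw
      rcases hw with rfl | rfl
      · exact ⟨u', hu', rfl⟩
      · exact ⟨v', hv', rfl⟩
    by_cases huA : u' ∈ A <;> by_cases hvA : v' ∈ A
    · exact Or.inl (pack A huA hvA)
    · have hvB : v' ∈ B := hmemv.resolve_left hvA
      by_cases huB : u' ∈ B
      · exact Or.inr (pack B huB hvB)
      · exact absurd hadj' (hsep u' ⟨huA, huB⟩ v' ⟨hvB, hvA⟩)
    · have huB : u' ∈ B := hmemu.resolve_left huA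
      by_cases hvB : v' ∈ B
      · exact Or.inr (pack B huB hvB)
      · exact absurd hadj'.symm (hsep v' ⟨hvA, hvB⟩ u' ⟨huB, huA⟩)
    · have huB : u' ∈ B := hmemu.resolve_left huA
      have hvB : v' ∈ B := hmemv.resolve_left hvA
      exact Or.inr (pack B huB hvB)

set_option maxHeartbeats 1600000 in
lemma main_ind {V : Type*} [Finite V] (G : SimpleGraph V) (c δ a : ℝ)
    (hc : 1 ≤ c) (hδ0 : 0 < δ) (hδ1 : δ ≤ 1) (ha : 1 ≤ a)
    (haeq : a ^ δ = 4 * c * (Real.log (Real.exp 1 * a)) ^ 2)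
    (hsep : HasSmallSeparators G c (1 - δ))
    (ha54 : 54 ≤ a) (hl5 : 5 ≤ Real.log (Real.exp 1 * a))
    (hdl : 2 ≤ δ * Real.log (Real.exp 1 * a)) :
    ∀ n : ℕ, ∀ s : Set V, s.ncard ≤ n →
      ((ES G s).ncard : ℝ) ≤ a * ((s.ncard : ℝ)
        - (s.ncard : ℝ) / (2 * Real.log (Real.exp 1 * (s.ncard : ℝ)))) := by
  intro n
  induction n with
  | zero =>
    intro s hs
    have hs0 : s.ncard = 0 := Nat.le_zero.mp hs
    have hes : ES G s = ∅ := by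
      rw [Set.eq_empty_iff_forall_notMem]
      intro e he
      obtain ⟨hee, hsupp⟩ := he
      have hse : s = ∅ := (Set.ncard_eq_zero s.toFinite).mp hs0
      induction e with
      | _ u v => exact absurd (hsupp u (Sym2.mem_mk_left u v)) (by rw [hse]; exact id)
    rw [hes, hs0]
    simp
  | succ n IH =>
    intro s hs
    rcases Nat.lt_or_ge n s.ncard with hlt | hle
    swap
    · exact IH s hle
    have hm : s.ncard = n + 1 := le_antisymm hs hlt
    set m := s.ncard with hmdef
    have hm1 : 1 ≤ m := by omega
    have hmR0 : (0:ℝ) < m := by exact_mod_cast hm1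
    have hL1 : 1 ≤ Real.log (Real.exp 1 * (m:ℝ)) := by
      rw [Real.log_mul (Real.exp_ne_zero 1) (ne_of_gt hmR0), Real.log_exp]
      have : (0:ℝ) ≤ Real.log m := Real.log_nonneg (by exact_mod_cast hm1)
      linarith
    have hL0 : (0:ℝ) < 2 * Real.log (Real.exp 1 * (m:ℝ)) := by linarith
    rcases le_or_gt (m:ℝ) a with hbase | hstep
    · have h1 : ((ES G s).ncard : ℝ) ≤ (m.choose 2 : ℝ) := by
        exact_mod_cast ES_card_le G s
      have h2 : (m.choose 2 : ℝ) = m * ((m:ℝ) - 1) / 2 := Nat.cast_choose_two ℝ m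
      have h3 : (m:ℝ) / (2 * Real.log (Real.exp 1 * (m:ℝ))) ≤ (m:ℝ) / 2 := by
        apply div_le_div_of_nonneg_left hmR0.le (by norm_num)
        linarith
      rw [h2] at h1
      have h4 : (m:ℝ) * ((m:ℝ) - 1) / 2 ≤ a * ((m:ℝ) - (m:ℝ)/2) := by
        have : a * ((m:ℝ) - (m:ℝ)/2) = a * (m:ℝ) / 2 := by ring
        rw [this]
        have hma : (m:ℝ) - 1 ≤ a := by linarith
        nlinarith
      calc ((ES G s).ncard : ℝ) ≤ (m:ℝ) * ((m:ℝ) - 1) / 2 := h1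
        _ ≤ a * ((m:ℝ) - (m:ℝ)/2) := h4
        _ ≤ a * ((m:ℝ) - (m:ℝ) / (2 * Real.log (Real.exp 1 * (m:ℝ)))) := by
            apply mul_le_mul_of_nonneg_left _ (by linarith : (0:ℝ) ≤ a)
            linarith
    · obtain ⟨A, B, ⟨⟨hABu, hABsep⟩, hbalA, hbalB⟩, hord⟩ :=
        hsep s (G.induce s) le_rfl
      set A' := Subtype.val '' A with hA'def
      set B' := Subtype.val '' B with hB'def
      have hinj : Function.Injective (Subtype.val : ↥s → V) := Subtype.val_injective
      have hA's : A' ⊆ s := by rintro x ⟨u, _, rfl⟩; exact u.2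
      have hB's : B' ⊆ s := by rintro x ⟨u, _, rfl⟩; exact u.2
      have hunion : A' ∪ B' = s := by
        rw [hA'def, hB'def, ← Set.image_union, hABu, Subtype.coe_image_univ]
      set t := (A' ∩ B').ncard with htdef
      set sA := A'.ncard with hsAdef
      set sB := B'.ncard with hsBdef
      have hts : t = sepOrder A B := by
        rw [htdef, hA'def, hB'def, ← Set.image_inter hinj,
          Set.ncard_image_of_injective _ hinj, sepOrder, Nat.card_coe_set_eq]
      have hsum : m + t = sA + sB := by
        rw [htdef, hsAdef, hsBdef, ← Set.ncard_union_add_ncard_inter A' B', hunion]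
      have hcards : Nat.card ↥s = m := by rw [Nat.card_coe_set_eq]
      have hdA : Nat.card ↥(A \ B) = (A' \ B').ncard := by
        rw [hA'def, hB'def, ← Set.image_diff hinj,
          Set.ncard_image_of_injective _ hinj, Nat.card_coe_set_eq]
      have hdB : Nat.card ↥(B \ A) = (B' \ A').ncard := by
        rw [hA'def, hB'def, ← Set.image_diff hinj,
          Set.ncard_image_of_injective _ hinj, Nat.card_coe_set_eq]
      have hsAd : sA ≤ (A' \ B').ncard + t := by
        rw [hsAdef, htdef]
        calc A'.ncard = ((A' \ B') ∪ (A' ∩ B')).ncard := by rw [Set.diff_union_inter]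
          _ ≤ (A' \ B').ncard + (A' ∩ B').ncard := Set.ncard_union_le _ _
      have hsBd : sB ≤ (B' \ A').ncard + t := by
        rw [hsBdef, htdef, Set.inter_comm]
        calc B'.ncard = ((B' \ A') ∪ (B' ∩ A')).ncard := by rw [Set.diff_union_inter]
          _ ≤ (B' \ A').ncard + (B' ∩ A').ncard := Set.ncard_union_le _ _
      rw [hcards, hdA] at hbalA
      rw [hcards, hdB] at hbalB
      have hbalAR : (sA:ℝ) ≤ 2 * (m:ℝ) / 3 + t := by
        have h1 : (sA:ℝ) ≤ ((A' \ B').ncard : ℝ) + t := by exact_mod_cast hsAd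
        have h2 : 3 * ((A' \ B').ncard : ℝ) ≤ 2 * m := by exact_mod_cast hbalA
        linarith
      have hbalBR : (sB:ℝ) ≤ 2 * (m:ℝ) / 3 + t := by
        have h1 : (sB:ℝ) ≤ ((B' \ A').ncard : ℝ) + t := by exact_mod_cast hsBd
        have h2 : 3 * ((B' \ A').ncard : ℝ) ≤ 2 * m := by exact_mod_cast hbalB
        linarith
      have hsumR : (sA:ℝ) + sB = (m:ℝ) + t := by exact_mod_cast hsum.symm
      set L := Real.log (Real.exp 1 * (m:ℝ)) with hLdef
      have hL5 : 5 ≤ L := by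
        rw [hLdef]
        calc (5:ℝ) ≤ Real.log (Real.exp 1 * a) := hl5
          _ ≤ Real.log (Real.exp 1 * m) := by
              apply Real.log_le_log (by positivity)
              have := Real.exp_pos 1
              nlinarith
      have hm54 : (54:ℝ) ≤ m := by linarith
      have htb : (t:ℝ) ≤ (m:ℝ) / (4 * L ^ 2) := by
        have h1 : (t:ℝ) ≤ c * (m:ℝ) ^ (1 - δ) := by
          rw [hts]
          have : Nat.card ↥s = m := hcards
          rw [← this]
          exact hord
        have h2 : (m:ℝ) ^ (1 - δ) = (m:ℝ) / (m:ℝ) ^ δ := by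
          rw [Real.rpow_sub hmR0, Real.rpow_one]
        have h3 : 4 * c * L ^ 2 ≤ (m:ℝ) ^ δ := by
          rw [hLdef]; exact mono_lem c δ a m hc hδ0 ha haeq hdl hstep.le
        have hp : (0:ℝ) < (m:ℝ) ^ δ := Real.rpow_pos_of_pos hmR0 δ
        have hc0 : (0:ℝ) < c := by linarith
        have hd1 : (0:ℝ) < 4 * c * L ^ 2 := by nlinarith
        have hd2 : (0:ℝ) < 4 * L ^ 2 := by nlinarith
        have hcm0 : (0:ℝ) ≤ c * (m:ℝ) := by positivity
        rw [h2] at h1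
        calc (t:ℝ) ≤ c * ((m:ℝ) / (m:ℝ) ^ δ) := h1
          _ = c * (m:ℝ) / (m:ℝ) ^ δ := by ring
          _ ≤ c * (m:ℝ) / (4 * c * L ^ 2) := by
              exact div_le_div_of_nonneg_left hcm0 hd1 h3
          _ = (m:ℝ) / (4 * L ^ 2) := by
              rw [div_eq_div_iff hd1.ne' hd2.ne']
              ring
      have ht0R : (0:ℝ) ≤ t := by positivity
      have htm3 : (t:ℝ) < (m:ℝ) / 3 := by
        have : (m:ℝ) / (4 * L^2) ≤ m / 100 := by
          apply div_le_div_of_nonneg_left hmR0.le (by norm_num)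
          nlinarith
        have h2 : (m:ℝ)/100 < m/3 := by linarith
        linarith
      have hsA3 : (m:ℝ)/3 ≤ sA := by linarith
      have hsB3 : (m:ℝ)/3 ≤ sB := by linarith
      have hsAlt : sA < m := by
        have : (sA:ℝ) < m := by linarith
        exact_mod_cast this
      have hsBlt : sB < m := by
        have : (sB:ℝ) < m := by linarith
        exact_mod_cast this
      have hsplit := ES_split G s A B hABu hABsep
      have hcard : ((ES G s).ncard : ℝ) ≤ ((ES G A').ncard : ℝ) + ((ES G B').ncard : ℝ) := by
        have h1 : (ES G s).ncard ≤ (ES G A' ∪ ES G B').ncard :=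
          Set.ncard_le_ncard hsplit (Set.toFinite _)
        have h2 := Set.ncard_union_le (ES G A') (ES G B')
        exact_mod_cast le_trans h1 h2
      have hIA := IH A' (by omega)
      have hIB := IH B' (by omega)
      rw [← hsAdef] at hIA
      rw [← hsBdef] at hIB
      have hcore : (m:ℝ) / (2 * L) + t
          ≤ (sA:ℝ) / (2 * Real.log (Real.exp 1 * (sA:ℝ)))
            + (sB:ℝ) / (2 * Real.log (Real.exp 1 * (sB:ℝ))) := by
        rcases le_total (sA:ℝ) (sB:ℝ) with hAB' | hAB'
        · exact core_ineq m t sA sB L hm54 hLdef hL5 ht0R htb (by linarith) hAB' hbalBR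
        · have := core_ineq m t sB sA L hm54 hLdef hL5 ht0R htb (by linarith) hAB' hbalAR
          linarith
      have ha0 : (0:ℝ) ≤ a := by linarith
      calc ((ES G s).ncard : ℝ)
          ≤ ((ES G A').ncard : ℝ) + ((ES G B').ncard : ℝ) := hcard
        _ ≤ a * ((sA:ℝ) - (sA:ℝ) / (2 * Real.log (Real.exp 1 * (sA:ℝ))))
            + a * ((sB:ℝ) - (sB:ℝ) / (2 * Real.log (Real.exp 1 * (sB:ℝ)))) := by
            exact add_le_add hIA hIB
        _ ≤ a * ((m:ℝ) - (m:ℝ) / (2 * L)) := by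
            rw [← mul_add]
            apply mul_le_mul_of_nonneg_left _ ha0
            have expand : (sA:ℝ) - (sA:ℝ) / (2 * Real.log (Real.exp 1 * (sA:ℝ)))
                + ((sB:ℝ) - (sB:ℝ) / (2 * Real.log (Real.exp 1 * (sB:ℝ))))
                = ((m:ℝ) + t) - ((sA:ℝ) / (2 * Real.log (Real.exp 1 * (sA:ℝ)))
                  + (sB:ℝ) / (2 * Real.log (Real.exp 1 * (sB:ℝ)))) := by
              rw [← hsumR]; ring
            rw [expand]
            linarith


/-- Strengthened inductive claim: with `a ^ δ = 4c·log²(ea)` and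
`h(n) = n/(2 log(en))`, if every subgraph of `G` has a balanced separator of order
at most `c·n^{1−δ}`, then `|E(G)| ≤ a·(|V(G)| − h(|V(G)|))`. -/
theorem edge_density_bound_strong {V : Type*} [Finite V] (G : SimpleGraph V)
    (c δ a : ℝ) (hc : 1 ≤ c) (hδ0 : 0 < δ) (hδ1 : δ ≤ 1) (ha : 1 ≤ a)
    (haeq : a ^ δ = 4 * c * (Real.log (Real.exp 1 * a)) ^ 2)
    (hsep : HasSmallSeparators G c (1 - δ)) :
    (Nat.card ↥G.edgeSet : ℝ) ≤
      a * ((Nat.card V : ℝ)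
        - (Nat.card V : ℝ) / (2 * Real.log (Real.exp 1 * (Nat.card V : ℝ)))) := by
  obtain ⟨ha54, hl5, hdl⟩ := a_facts c δ a hc hδ0 hδ1 ha haeq
  have hmain := main_ind G c δ a hc hδ0 hδ1 ha haeq hsep ha54 hl5 hdl
    (Set.univ : Set V).ncard Set.univ le_rfl
  have h1 : ES G Set.univ = G.edgeSet := by
    ext e
    simp [ES]
  have h2 : (Set.univ : Set V).ncard = Nat.card V := Set.ncard_univ V
  rw [h1, h2] at hmain
  rwa [Nat.card_coe_set_eq]


end Paper
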